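/- Let 0 ≤ t0 < T and ℓ > 0. Let a : [t0, T] → ℝ be continuous with a(t) ≥ 0 for all t, let b : [t0, T] → ℝ be continuous, and let x : [t0, T] → ℝ be differentiable with x'(t) = a(t)·(ℓ·x(t) + b(t)) for all t ∈ [t0, T] and x(T) = 0. Then |x(t0)| ≤ ℓ^{−1}·(sup_{t∈[t0,T]} |b(t)|)·(1 − exp(−ℓ·∫_{t0}^T a(s) ds)); in particular |x(t0)| ≤ ℓ^{−1}·sup_{t∈[t0,T]} |b(t)|. -/

import Mathlib

open Set intervalIntegral


/-- Deterministic comparison estimate from the proof of Proposition `prop:26:2:1`: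
if `x' = a·(ℓx + b)` on `[t0,T]` with `a ≥ 0` continuous, `b` continuous and
`x(T) = 0`, then `|x(t0)| ≤ ℓ⁻¹ (sup |b|) (1 - e^{-ℓ∫_{t0}^T a})`; in particular
`|x(t0)| ≤ ℓ⁻¹ sup |b|`. -/
theorem stmt_13 (t0 T ℓ : ℝ) (h0 : 0 ≤ t0) (hT : t0 < T) (hℓ : 0 < ℓ)
    (a b x : ℝ → ℝ)
    (ha : ContinuousOn a (Set.Icc t0 T)) (ha0 : ∀ t ∈ Set.Icc t0 T, 0 ≤ a t)
    (hb : ContinuousOn b (Set.Icc t0 T))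
    (hx : ∀ t ∈ Set.Icc t0 T,
      HasDerivWithinAt x (a t * (ℓ * x t + b t)) (Set.Icc t0 T) t)
    (hxT : x T = 0) :
    |x t0| ≤ ℓ⁻¹ * sSup ((fun t => |b t|) '' Set.Icc t0 T) *
      (1 - Real.exp (-ℓ * ∫ s in t0..T, a s)) ∧
    |x t0| ≤ ℓ⁻¹ * sSup ((fun t => |b t|) '' Set.Icc t0 T) := by
  set M := sSup ((fun t => |b t|) '' Set.Icc t0 T) with hMdef
  have hTmem : T ∈ Set.Icc t0 T := ⟨hT.le, le_rfl⟩
  have h0mem : t0 ∈ Set.Icc t0 T := ⟨le_rfl, hT.le⟩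
  have hbdd : BddAbove ((fun t => |b t|) '' Set.Icc t0 T) :=
    (isCompact_Icc.image_of_continuousOn (hb.abs)).bddAbove
  have hM : ∀ t ∈ Set.Icc t0 T, |b t| ≤ M := fun t ht =>
    le_csSup hbdd ⟨t, ht, rfl⟩
  have hM0 : 0 ≤ M := le_trans (abs_nonneg _) (hM T hTmem)
  -- integrability of a on subintervals
  have haint : ∀ t ∈ Set.Icc t0 T, IntervalIntegrable a MeasureTheory.volume t0 t := by
    intro t ht
    apply (ha.mono ?_).intervalIntegrable
    rw [Set.uIcc_of_le ht.1]
    exact Set.Icc_subset_Icc le_rfl ht.2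
  set A : ℝ → ℝ := fun t => ∫ s in t0..t, a s with hAdef
  have hA : ∀ t ∈ Set.Icc t0 T, HasDerivWithinAt A (a t) (Set.Icc t0 T) t := by
    intro t ht
    haveI : Fact (t ∈ Set.Icc t0 T) := ⟨ht⟩
    exact intervalIntegral.integral_hasDerivWithinAt_right (haint t ht)
      ⟨Set.Icc t0 T, self_mem_nhdsWithin, ha.aestronglyMeasurable measurableSet_Icc⟩
      (ha t ht)
  -- continuity facts
  have hxC : ContinuousOn x (Set.Icc t0 T) := fun t ht => (hx t ht).continuousWithinAt
  have hAC : ContinuousOn A (Set.Icc t0 T) := fun t ht => (hA t ht).continuousWithinAt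
  set E : ℝ → ℝ := fun t => Real.exp (-(ℓ * A t)) with hEdef
  have hEC : ContinuousOn E (Set.Icc t0 T) :=
    (Real.continuous_exp.comp_continuousOn ((hAC.const_smul ℓ).neg))
  have hE : ∀ t ∈ Set.Icc t0 T,
      HasDerivWithinAt E (E t * (-(ℓ * a t))) (Set.Icc t0 T) t := by
    intro t ht
    exact (((hA t ht).const_mul ℓ).neg).exp
  set g : ℝ → ℝ := fun t => x t * E t with hgdef
  have hgC : ContinuousOn g (Set.Icc t0 T) := hxC.mul hEC
  have hg : ∀ t ∈ Set.Icc t0 T,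
      HasDerivWithinAt g (a t * b t * E t) (Set.Icc t0 T) t := by
    intro t ht
    have : HasDerivWithinAt g (a t * (ℓ * x t + b t) * E t + x t * (E t * -(ℓ * a t)))
        (Set.Icc t0 T) t := (hx t ht).mul (hE t ht)
    convert this using 1
    simp only [hEdef]
    ring
  set φ : ℝ → ℝ := fun t => -(M / ℓ) * E t with hφdef
  have hφC : ContinuousOn φ (Set.Icc t0 T) := continuousOn_const.mul hEC
  have hφ : ∀ t ∈ Set.Icc t0 T,
      HasDerivWithinAt φ (M * a t * E t) (Set.Icc t0 T) t := by
    intro t ht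
    have : HasDerivWithinAt φ (-(M / ℓ) * (E t * -(ℓ * a t))) (Set.Icc t0 T) t :=
      (hE t ht).const_mul (-(M / ℓ))
    convert this using 1
    field_simp
  have hIoo : interior (Set.Icc t0 T) = Set.Ioo t0 T := interior_Icc
  have hsub : Set.Ioo t0 T ⊆ Set.Icc t0 T := Set.Ioo_subset_Icc_self
  have key : ∀ (σ : ℝ), σ = 1 ∨ σ = -1 →
      MonotoneOn (fun t => φ t + σ * g t) (Set.Icc t0 T) := by
    intro σ hσ
    apply monotoneOn_of_hasDerivWithinAt_nonneg (convex_Icc t0 T)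
      (f' := fun t => M * a t * E t + σ * (a t * b t * E t))
      (hφC.add (continuousOn_const.mul hgC))
    · intro t ht
      rw [hIoo] at ht ⊢
      exact ((hφ t (hsub ht)).add
        (((hg t (hsub ht)).const_mul σ))).mono hsub
    · intro t ht
      rw [hIoo] at ht
      have ht' := hsub ht
      have hE0 : 0 ≤ E t := (Real.exp_pos _).le
      have h1 : -(σ * b t) ≤ M := by
        rcases hσ with h | h <;> subst h
        · simpa using (neg_le_abs (b t)).trans (hM t ht')
        · simpa using (le_abs_self (b t)).trans (hM t ht')
      have h2 : 0 ≤ (M + σ * b t) * a t * E t :=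
        mul_nonneg (mul_nonneg (by linarith) (ha0 t ht')) hE0
      have heq : M * a t * E t + σ * (a t * b t * E t)
          = (M + σ * b t) * a t * E t := by ring
      rw [heq]; exact h2
  have hAt0 : A t0 = 0 := intervalIntegral.integral_same
  have hgt0 : g t0 = x t0 := by simp [hgdef, hEdef, hAt0]
  have hgT : g T = 0 := by simp [hgdef, hxT]
  have hbound : |x t0| ≤ φ T - φ t0 := by
    have k1 := key 1 (Or.inl rfl) h0mem hTmem hT.le
    have k2 := key (-1) (Or.inr rfl) h0mem hTmem hT.le
    simp only [one_mul, neg_one_mul] at k1 k2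
    rw [abs_le]
    constructor <;> [linarith [k1]; linarith [k2]]
  have hφval : φ T - φ t0 = ℓ⁻¹ * M * (1 - Real.exp (-ℓ * A T)) := by
    simp only [hφdef, hEdef, hAt0, mul_zero, neg_zero, Real.exp_zero]
    field_simp
    ring_nf
  have first : |x t0| ≤ ℓ⁻¹ * M * (1 - Real.exp (-ℓ * ∫ s in t0..T, a s)) := by
    rw [← hφval] at *
    exact hbound
  refine ⟨first, first.trans ?_⟩
  have hAT0 : 0 ≤ A T := by
    apply intervalIntegral.integral_nonneg hT.le
    intro u hu; exact ha0 u hu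
  have hexp : Real.exp (-ℓ * A T) ≤ 1 := by
    rw [Real.exp_le_one_iff]
    nlinarith
  have : 1 - Real.exp (-ℓ * A T) ≤ 1 := by
    have := (Real.exp_pos (-ℓ * A T)).le; linarith
  calc ℓ⁻¹ * M * (1 - Real.exp (-ℓ * A T)) ≤ ℓ⁻¹ * M * 1 := by
        apply mul_le_mul_of_nonneg_left this (mul_nonneg (inv_nonneg.mpr hℓ.le) hM0)
    _ = ℓ⁻¹ * M := mul_one _
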